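/- For every even integer g ≥ 2, the polynomial t^{2g+1} - 2t^{g+1} - 2t^g + 1 has a real root strictly greater than 1, and if λ_g denotes its largest real root, then g·log λ_g ≤ log(2 + √3). -/

import Mathlib

lemma aux_root (g : ℕ) (hg : 2 ≤ g) :
    ∃ l : ℝ, 1 < l ∧ l ^ (2 * g + 1) - 2 * l ^ (g + 1) - 2 * l ^ g + 1 = 0 := by
  set F : ℝ → ℝ := fun t => t ^ (2 * g + 1) - 2 * t ^ (g + 1) - 2 * t ^ g + 1 with hF
  have hcont : ContinuousOn F (Set.Icc (1 : ℝ) 3) := by fun_prop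
  have h1 : F 1 = -2 := by simp [hF]; ring
  have h3 : 0 < F 3 := by
    have h9 : (9 : ℝ) ≤ 3 ^ g := by
      calc (9 : ℝ) = 3 ^ 2 := by norm_num
      _ ≤ 3 ^ g := pow_le_pow_right₀ (by norm_num) hg
    have hsq : (3:ℝ) ^ (2 * g + 1) = 3 * (3 ^ g) ^ 2 := by
      rw [show 2 * g + 1 = g + g + 1 by ring, pow_add, pow_add, pow_one]; ring
    have hgp1 : (3:ℝ) ^ (g + 1) = 3 ^ g * 3 := by rw [pow_add, pow_one]
    simp only [hF]
    rw [hsq, hgp1]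
    nlinarith [sq_nonneg ((3:ℝ)^g - 3)]
  have hsub : Set.Ioo (F 1) (F 3) ⊆ F '' Set.Ioo 1 3 :=
    intermediate_value_Ioo (by norm_num) hcont
  have h0 : (0 : ℝ) ∈ Set.Ioo (F 1) (F 3) := by rw [h1]; exact ⟨by norm_num, h3⟩
  obtain ⟨c, hc, hfc⟩ := hsub h0
  exact ⟨c, hc.1, hfc⟩

theorem stmt_7 (g : ℕ) (hg : 2 ≤ g) (hge : Even g) :
    (∃ l : ℝ, 1 < l ∧ l ^ (2 * g + 1) - 2 * l ^ (g + 1) - 2 * l ^ g + 1 = 0) ∧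
    (∀ l : ℝ,
      (l ^ (2 * g + 1) - 2 * l ^ (g + 1) - 2 * l ^ g + 1 = 0 ∧
        ∀ s : ℝ, s ^ (2 * g + 1) - 2 * s ^ (g + 1) - 2 * s ^ g + 1 = 0 → s ≤ l) →
      (g : ℝ) * Real.log l ≤ Real.log (2 + Real.sqrt 3)) := by
  obtain ⟨r, hr1, hr0⟩ := aux_root g hg
  refine ⟨⟨r, hr1, hr0⟩, ?_⟩
  rintro l ⟨hl0, hmax⟩
  have hl1 : 1 < l := lt_of_lt_of_le hr1 (hmax r hr0)
  set x : ℝ := l ^ g with hx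
  have hx1 : 1 < x := one_lt_pow₀ hl1 (by omega)
  -- rewrite the equation
  have hpw : l ^ (2 * g + 1) = x ^ 2 * l := by
    rw [hx, show 2 * g + 1 = g + g + 1 by ring, pow_add, pow_add, pow_one]; ring
  have hpw2 : l ^ (g + 1) = x * l := by rw [hx, pow_add, pow_one]
  rw [hpw, hpw2] at hl0
  -- x^2*l - 2*(x*l) - 2*x + 1 = 0  ⇒  l*(x^2-2x) = 2x-1
  have key : l * (x ^ 2 - 2 * x) = 2 * x - 1 := by linarith
  have hpos : 0 < x ^ 2 - 2 * x := by
    by_contra h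
    push_neg at h
    nlinarith
  have hlt : x < 2 + Real.sqrt 3 := by
    have h1 : x ^ 2 - 2 * x < l * (x ^ 2 - 2 * x) := by nlinarith
    have h2 : x ^ 2 - 4 * x + 1 < 0 := by linarith
    have hs : Real.sqrt 3 ^ 2 = 3 := Real.sq_sqrt (by norm_num)
    nlinarith [Real.sqrt_nonneg 3]
  have hlog : (g : ℝ) * Real.log l = Real.log x := by
    rw [hx, Real.log_pow]
  rw [hlog]
  exact Real.log_le_log (by linarith) hlt.le
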